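/- arXiv:2103.02994 — 2 statements merged into one kernel-verified Lean document; each statement's English description precedes it below -/
import Mathlib

section
/- For every convex body K ⊂ ℝⁿ (n ≥ 2) containing the origin in its interior, there exists a unit vector ξ ∈ S^{n−1} such that ∫_K ⟨∇‖x‖_K(x), ξ⟩⁴ dx ≥ (3n/(n+2)) · (∫_K ⟨∇‖x‖_K(x), ξ⟩² dx)² / V(K), where the integrals are with respect to Lebesgue measure on K and V(K) is the volume of K. Equivalently, ∫_{S^{n−1}} lin_{K,ξ}⁴ dV_K ≥ (3n/(n+2)) · (∫_{S^{n−1}} lin_{K,ξ}² dV_K)²/V(K). -/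
open MeasureTheory Set Filter
open scoped Pointwise ENNReal NNReal Topology

noncomputable section

/-- Euclidean space `ℝⁿ`. -/
abbrev Euc (n : ℕ) : Type := EuclideanSpace ℝ (Fin n)

variable {n : ℕ}

/-- The unit sphere `S^{n-1}`. -/
def sph (n : ℕ) : Set (Euc n) := Metric.sphere 0 1

/-- A convex body containing the origin in its interior (the class `𝒦`). -/
def IsBody (K : Set (Euc n)) : Prop :=
  Convex ℝ K ∧ IsCompact K ∧ (0 : Euc n) ∈ interior K

/-- Origin-symmetric set (`𝒦ₑ` members). -/
def IsOriginSymm (K : Set (Euc n)) : Prop := K = -K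

/-- Support function `h_K`. -/
def suppFn (K : Set (Euc n)) (x : Euc n) : ℝ :=
  sSup ((fun y => (inner ℝ x y : ℝ)) '' K)

/-- The (a.e. defined) Gauss-type map `x ↦ ∇‖x‖_K / |∇‖x‖_K|`. -/
def gaussMap (K : Set (Euc n)) (x : Euc n) : Euc n :=
  ‖gradient (gauge K) x‖⁻¹ • gradient (gauge K) x

/-- Cone-volume measure `V_K`: pushforward of Lebesgue measure on `K` under the Gauss map. -/
def coneVol (K : Set (Euc n)) : Measure (Euc n) :=
  Measure.map (gaussMap K) (volume.restrict K)

/-- Surface-area measure `S_K`: pushforward of the `(n-1)`-dimensional Hausdorff measure on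
`∂K` under the Gauss map. -/
def surfArea (K : Set (Euc n)) : Measure (Euc n) :=
  Measure.map (gaussMap K)
    ((Measure.hausdorffMeasure ((n : ℝ) - 1)).restrict (frontier K))

/-- `L^p` surface-area measure `S_p K = h_K^{1-p} S_K`. -/
def SpM (K : Set (Euc n)) (p : ℝ) : Measure (Euc n) :=
  (surfArea K).withDensity fun θ => ENNReal.ofReal (suppFn K θ ^ (1 - p))

/-- Volume. -/
def vol (K : Set (Euc n)) : ℝ := (volume K).toReal

/-- The `K`-adapted linear functional `lin_{K,ξ}(θ) = ⟨θ,ξ⟩ / h_K(θ)`. -/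
def linK (K : Set (Euc n)) (ξ θ : Euc n) : ℝ := (inner ℝ θ ξ : ℝ) / suppFn K θ

/-- The Wulff shape (Alexandrov body) of a function `ψ` on the sphere:
`{x : ⟨x,θ⟩ ≤ ψ(θ) ∀ θ ∈ S^{n-1}}`; recovers `K` from `h_K`. -/
def wulff (ψ : Euc n → ℝ) : Set (Euc n) := {x | ∀ θ ∈ sph n, (inner ℝ x θ : ℝ) ≤ ψ θ}

/-- Mixed volume `V(L[m], K[n-m])`, defined via the coefficients of the polynomial
`t ↦ V(K + tL) = Σ_m binom(n,m) V(L[m],K[n-m]) t^m` (extracted as a one-sided derivative). -/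
def mixedVolBody (m : ℕ) (K L : Set (Euc n)) : ℝ :=
  ((n.choose m : ℝ) * (Nat.factorial m : ℝ))⁻¹ *
    iteratedDerivWithin m (fun t : ℝ => vol (K + t • L)) (Set.Ici 0) 0

/-- Mixed volume `V(φ[m], h_K[n-m])` of a difference of support functions `φ` with `K`,
via the expansion of `t ↦ V(wulff (h_K + tφ))` for `t ≥ 0`. -/
def mixedVolFn (K : Set (Euc n)) (φ : Euc n → ℝ) (m : ℕ) : ℝ :=
  ((n.choose m : ℝ) * (Nat.factorial m : ℝ))⁻¹ *
    iteratedDerivWithin m (fun t : ℝ => vol (wulff fun θ => suppFn K θ + t * φ θ))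
      (Set.Ici 0) 0

/-- Dirichlet energy `∫ |∇z|²_{g_K} dV_K` of the Hilbert--Brunn--Minkowski operator, via the
integration-by-parts identity `∫ |∇z|²_{g_K} dV_K = (n-1)(∫ z² dV_K - V(zh_K,zh_K,h_K[n-2]))`. -/
def dirEnergy (K : Set (Euc n)) (z : Euc n → ℝ) : ℝ :=
  ((n : ℝ) - 1) *
    ((∫ θ, (z θ) ^ 2 ∂coneVol K) - mixedVolFn K (fun θ => z θ * suppFn K θ) 2)

/-- Variance `Var_{V_K}(z) = ∫ z² dV_K - (∫ z dV_K)²/V(K)`. -/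
def varV (K : Set (Euc n)) (z : Euc n → ℝ) : ℝ :=
  (∫ θ, (z θ) ^ 2 ∂coneVol K) - (∫ θ, z θ ∂coneVol K) ^ 2 / vol K

/-- A function on `ℝⁿ` representing a `C²` function on the sphere via its `0`-homogeneous
extension. -/
def IsC2Sphere (z : Euc n → ℝ) : Prop :=
  ContDiffOn ℝ 2 z ({(0 : Euc n)}ᶜ) ∧ ∀ t : ℝ, 0 < t → ∀ x, z (t • x) = z x

/-- Even function. -/
def IsEvenFn (z : Euc n → ℝ) : Prop := ∀ x, z (-x) = z x

/-- Non-constant on the sphere. -/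
def NonConstOnSph (z : Euc n → ℝ) : Prop :=
  ∃ θ₁ ∈ sph n, ∃ θ₂ ∈ sph n, z θ₁ ≠ z θ₂

/-- First nonzero even eigenvalue `λ_{1,e}(-Δ_K)` of the Hilbert--Brunn--Minkowski operator:
the infimum of the Rayleigh quotients over even non-constant `C²` functions on the sphere. -/
def lambda1e (K : Set (Euc n)) : ℝ :=
  sInf { r : ℝ | ∃ z : Euc n → ℝ, IsC2Sphere z ∧ IsEvenFn z ∧ NonConstOnSph z ∧
    r = dirEnergy K z / varV K z }

/-- The class `𝒦²₊`: `h_K` is `C²` away from the origin and the restriction of `∇²h_K(x)`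
to directions transversal to `x` is positive definite (strictly positive curvature). -/
def IsK2plus (K : Set (Euc n)) : Prop :=
  IsBody K ∧ ContDiffOn ℝ 2 (suppFn K) ({(0 : Euc n)}ᶜ) ∧
    ∀ x : Euc n, x ≠ 0 → ∀ v : Euc n, v ∉ Submodule.span ℝ ({x} : Set (Euc n)) →
      0 < fderiv ℝ (fun y => fderiv ℝ (suppFn K) y v) x v

/-- A centered ellipsoid: image of the Euclidean unit ball under a nonsingular linear map. -/
def IsCenteredEllipsoid (K : Set (Euc n)) : Prop :=
  ∃ T : Euc n ≃ₗ[ℝ] Euc n, K = T '' Metric.closedBall 0 1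

/-- Tangential body to a centered Euclidean ball. -/
def IsTangentialBody (K : Set (Euc n)) : Prop :=
  ∃ R : ℝ, 0 < R ∧ ∃ S : Set (Euc n), IsClosed S ∧ S ⊆ sph n ∧
    K = ⋂ θ ∈ S, {x : Euc n | (inner ℝ x θ : ℝ) ≤ R}

/-- The uniform (rotation-invariant) surface measure on the sphere `S^{m-1}`. -/
def sphMeas (m : ℕ) : Measure (Euc m) :=
  (Measure.hausdorffMeasure ((m : ℝ) - 1)).restrict (sph m)

/-- A finite Borel measure on the sphere is isotropic. -/
def IsIsotropic (μ : Measure (Euc n)) : Prop :=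
  ∀ u : Euc n, (∫ x, (inner ℝ x u : ℝ) ^ 2 ∂μ) = ‖u‖ ^ 2 / n * (μ Set.univ).toReal

/-- Putterman's mixed-volume variant `λ^C_{1,e}(K)` of the first nonzero even eigenvalue. -/
def lambdaC1e (K : Set (Euc n)) : ℝ :=
  ((n : ℝ) - 1) * sInf { r : ℝ | ∃ L : Set (Euc n), IsBody L ∧ IsOriginSymm L ∧
    ¬ (∃ c : ℝ, ∀ᵐ θ ∂coneVol K, suppFn L θ / suppFn K θ = c) ∧
    r = ((∫ θ, (suppFn L θ / suppFn K θ) ^ 2 ∂coneVol K) - mixedVolBody 2 K L) /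
        ((∫ θ, (suppFn L θ / suppFn K θ) ^ 2 ∂coneVol K) -
          (mixedVolBody 1 K L) ^ 2 / vol K) }

/-- The functional `F_{μ,p}` of the variational approach to the even `L^p`-Minkowski problem. -/
def Fmu (μ : Measure (Euc n)) (p : ℝ) (K : Set (Euc n)) : ℝ :=
  if p = 0 then
    Real.exp ((∫ θ, Real.log (suppFn K θ) ∂μ) / (μ Set.univ).toReal) /
      vol K ^ ((1 : ℝ) / n)
  else (1 / p) * (∫ θ, suppFn K θ ^ p ∂μ) / vol K ^ (p / n)

/-- `m`-th `C²ₑ`-variation `δ^m_K F(z) = (d/dε)^m|₀ F(K_ε)` where `h_{K_ε} = h_K (1 + ε z)`. -/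
def deltaVar (F : Set (Euc n) → ℝ) (K : Set (Euc n)) (m : ℕ) (z : Euc n → ℝ) : ℝ :=
  iteratedDeriv m (fun ε : ℝ => F (wulff fun θ => suppFn K θ * (1 + ε * z θ))) 0

/-- A nonzero finite even Borel measure supported on the sphere. -/
def IsEvenMeasureOnSphere (μ : Measure (Euc n)) : Prop :=
  μ ((sph n)ᶜ) = 0 ∧ Measure.map (fun x : Euc n => -x) μ = μ

/-- Local minimum point of `F_{μ,p}` on `𝒦ₑ` with respect to the Hausdorff metric. -/
def IsLocalMinKe (μ : Measure (Euc n)) (p : ℝ) (K : Set (Euc n)) : Prop :=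
  IsBody K ∧ IsOriginSymm K ∧ ∃ ε : ℝ, 0 < ε ∧ ∀ L : Set (Euc n), IsBody L → IsOriginSymm L →
    Metric.hausdorffDist K L < ε → Fmu μ p K ≤ Fmu μ p L

/-- Local maximum point of `F_{μ,p}` on `𝒦ₑ` with respect to the Hausdorff metric. -/
def IsLocalMaxKe (μ : Measure (Euc n)) (p : ℝ) (K : Set (Euc n)) : Prop :=
  IsBody K ∧ IsOriginSymm K ∧ ∃ ε : ℝ, 0 < ε ∧ ∀ L : Set (Euc n), IsBody L → IsOriginSymm L →
    Metric.hausdorffDist K L < ε → Fmu μ p L ≤ Fmu μ p K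

/-- Geometric distance `d_G(K, B₂ⁿ) = inf{ab : (1/b)B₂ⁿ ⊆ K ⊆ aB₂ⁿ}`. -/
def geomDistBall (K : Set (Euc n)) : ℝ :=
  sInf { d : ℝ | ∃ a b : ℝ, 0 < a ∧ 0 < b ∧ d = a * b ∧
    b⁻¹ • Metric.closedBall (0 : Euc n) 1 ⊆ K ∧ K ⊆ a • Metric.closedBall (0 : Euc n) 1 }

/-- The LYZ body `Γ_{-p}K` (whose gauge is `(n/V(K)) ∫ |lin_{K,x}|^p dV_K)^{1/p}`)
is a centered Euclidean ball. -/
def gammaIsBall (K : Set (Euc n)) (p : ℝ) : Prop :=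
  ∃ c : ℝ, 0 < c ∧ ∀ x : Euc n,
    ((n : ℝ) / vol K) * (∫ θ, |linK K x θ| ^ p ∂coneVol K) = c * ‖x‖ ^ p

end

private def sgn (b : Bool) : ℝ := if b then 1 else -1

private lemma sgn_sq (b : Bool) : sgn b ^ 2 = 1 := by cases b <;> simp [sgn]

private lemma rad_aux (m : ℕ) (a : Fin (m+1) → ℝ) (p : ℝ → ℝ) :
    ∑ ε : Fin (m+1) → Bool, p (∑ i, sgn (ε i) * a i)
      = (∑ ε : Fin m → Bool, p (a 0 + ∑ i : Fin m, sgn (ε i) * a i.succ))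
      + ∑ ε : Fin m → Bool, p (-(a 0) + ∑ i : Fin m, sgn (ε i) * a i.succ) := by
  rw [← (Fin.consEquiv (fun _ => Bool)).sum_comp, Fintype.sum_prod_type]
  have h0 : ∀ (b : Bool) (ε : Fin m → Bool),
      (∑ i, sgn (Fin.consEquiv (fun _ => Bool) (b, ε) i) * a i)
        = sgn b * a 0 + ∑ i : Fin m, sgn (ε i) * a i.succ := by
    intro b ε
    rw [Fin.sum_univ_succ]
    simp [Fin.consEquiv]
  simp only [h0]
  rw [Fintype.sum_bool]
  simp [sgn]

private lemma rad2 : ∀ (n : ℕ) (a : Fin n → ℝ),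
    ∑ ε : Fin n → Bool, (∑ i, sgn (ε i) * a i) ^ 2 = 2 ^ n * ∑ i, (a i) ^ 2 := by
  intro n
  induction n with
  | zero => intro a; simp
  | succ m ih =>
    intro a
    rw [rad_aux m a (fun x => x ^ 2)]
    have key : ∀ ε : Fin m → Bool,
        (a 0 + ∑ i : Fin m, sgn (ε i) * a i.succ) ^ 2
          + (-(a 0) + ∑ i : Fin m, sgn (ε i) * a i.succ) ^ 2
        = 2 * (∑ i : Fin m, sgn (ε i) * a i.succ) ^ 2 + 2 * (a 0) ^ 2 := by
      intro ε; ring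
    rw [← Finset.sum_add_distrib]
    simp only [key]
    rw [Finset.sum_add_distrib, ← Finset.mul_sum, ih (fun i => a i.succ), Finset.sum_const]
    simp only [Finset.card_univ, Fintype.card_fun, Fintype.card_bool, Fintype.card_fin,
      nsmul_eq_mul, Fin.sum_univ_succ (fun i => a i ^ 2)]
    push_cast
    ring

private lemma rad4 : ∀ (n : ℕ) (a : Fin n → ℝ),
    ∑ ε : Fin n → Bool, (∑ i, sgn (ε i) * a i) ^ 4
      = 2 ^ n * (3 * (∑ i, (a i) ^ 2) ^ 2 - 2 * ∑ i, (a i) ^ 4) := by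
  intro n
  induction n with
  | zero => intro a; simp
  | succ m ih =>
    intro a
    rw [rad_aux m a (fun x => x ^ 4)]
    have key : ∀ ε : Fin m → Bool,
        (a 0 + ∑ i : Fin m, sgn (ε i) * a i.succ) ^ 4
          + (-(a 0) + ∑ i : Fin m, sgn (ε i) * a i.succ) ^ 4
        = 2 * (∑ i : Fin m, sgn (ε i) * a i.succ) ^ 4
          + 12 * (a 0) ^ 2 * (∑ i : Fin m, sgn (ε i) * a i.succ) ^ 2
          + 2 * (a 0) ^ 4 := by
      intro ε; ring
    rw [← Finset.sum_add_distrib]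
    simp only [key]
    rw [Finset.sum_add_distrib, Finset.sum_add_distrib, ← Finset.mul_sum, ← Finset.mul_sum,
      ih (fun i => a i.succ), rad2 m (fun i => a i.succ), Finset.sum_const]
    simp only [Finset.card_univ, Fintype.card_fun, Fintype.card_bool, Fintype.card_fin,
      nsmul_eq_mul, Fin.sum_univ_succ (fun i => a i ^ 2), Fin.sum_univ_succ (fun i => a i ^ 4)]
    push_cast
    ring

private lemma cs_var {α : Type*} [MeasurableSpace α] (μ : Measure α) [IsFiniteMeasure μ]
    (f : α → ℝ) (hf : Integrable f μ) (hf2 : Integrable (fun x => f x ^ 2) μ) :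
    (∫ x, f x ∂μ) ^ 2 ≤ (μ Set.univ).toReal * ∫ x, f x ^ 2 ∂μ := by
  set V : ℝ := (μ Set.univ).toReal with hV
  set A : ℝ := ∫ x, f x ∂μ with hA
  have hVnn : 0 ≤ V := ENNReal.toReal_nonneg
  have key : (0:ℝ) ≤ ∫ x, (V * f x - A) ^ 2 ∂μ :=
    integral_nonneg fun x => sq_nonneg _
  have expand : ∀ x, (V * f x - A) ^ 2 = V ^ 2 * f x ^ 2 - 2 * V * A * f x + A ^ 2 := by
    intro x; ring
  rw [integral_congr_ae (Filter.Eventually.of_forall expand)] at key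
  have h1 : Integrable (fun x => V ^ 2 * f x ^ 2 - 2 * V * A * f x) μ :=
    (hf2.const_mul _).sub (hf.const_mul _)
  have h2 : Integrable (fun x => V ^ 2 * f x ^ 2) μ := hf2.const_mul _
  have h3 : Integrable (fun x => 2 * V * A * f x) μ := hf.const_mul _
  rw [integral_add h1 (integrable_const _), integral_sub h2 h3, integral_const_mul,
    integral_const_mul, integral_const] at key
  simp only [smul_eq_mul, measureReal_def, ← hA, ← hV] at key
  rcases eq_or_lt_of_le hVnn with h0 | hpos
  · have hμ : μ = 0 := by
      by_contra hne
      have h4 : μ Set.univ ≠ 0 := by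
        simpa [Measure.measure_univ_eq_zero] using hne
      have : 0 < V := ENNReal.toReal_pos h4 (measure_ne_top μ _)
      linarith
    simp [hA, hμ]
  · nlinarith [key, sq_nonneg A]

set_option maxHeartbeats 2000000 in
private lemma core {n : ℕ} (hn : 2 ≤ n) (μ : Measure (Euc n)) [IsFiniteMeasure μ]
    (φ : Euc n → Euc n) (hφ : Measurable φ) (C : ℝ) (hC : ∀ᵐ θ ∂μ, ‖φ θ‖ ≤ C)
    (hV : 0 < (μ Set.univ).toReal) :
    ∃ ξ : Euc n, ‖ξ‖ = 1 ∧
      3 * (n : ℝ) / ((n : ℝ) + 2) * (∫ θ, (inner ℝ (φ θ) ξ : ℝ) ^ 2 ∂μ) ^ 2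
          / (μ Set.univ).toReal
        ≤ ∫ θ, (inner ℝ (φ θ) ξ : ℝ) ^ 4 ∂μ := by
  classical
  set V : ℝ := (μ Set.univ).toReal with hVdef
  set f : Euc n → Euc n → ℝ := fun ξ θ => (inner ℝ (φ θ) ξ : ℝ) with hfdef
  -- measurability and bounds
  have hm : ∀ ξ : Euc n, Measurable (f ξ) := fun ξ => hφ.inner measurable_const
  have hb : ∀ ξ : Euc n, ∀ᵐ θ ∂μ, |f ξ θ| ≤ C * ‖ξ‖ := by
    intro ξ
    filter_upwards [hC] with θ hθ
    exact (abs_real_inner_le_norm _ _).trans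
      (mul_le_mul_of_nonneg_right hθ (norm_nonneg _))
  have hint1 : ∀ ξ : Euc n, Integrable (f ξ) μ := by
    intro ξ
    refine Integrable.mono' (integrable_const (C * ‖ξ‖)) (hm ξ).aestronglyMeasurable ?_
    filter_upwards [hb ξ] with θ h using by rwa [Real.norm_eq_abs]
  have hint2 : ∀ ξ η : Euc n, Integrable (fun θ => f ξ θ * f η θ) μ := by
    intro ξ η
    refine Integrable.mono' (integrable_const ((C * ‖ξ‖) * (C * ‖η‖)))
      ((hm ξ).mul (hm η)).aestronglyMeasurable ?_
    filter_upwards [hb ξ, hb η] with θ h1 h2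
    have e1 : (0:ℝ) ≤ C * ‖ξ‖ := le_trans (abs_nonneg _) h1
    rw [Real.norm_eq_abs, abs_mul]
    gcongr
  have hint4 : ∀ ξ η ζ ω : Euc n,
      Integrable (fun θ => f ξ θ * f η θ * f ζ θ * f ω θ) μ := by
    intro ξ η ζ ω
    refine Integrable.mono'
      (integrable_const ((C*‖ξ‖)*(C*‖η‖)*(C*‖ζ‖)*(C*‖ω‖)))
      ((((hm ξ).mul (hm η)).mul (hm ζ)).mul (hm ω)).aestronglyMeasurable ?_
    filter_upwards [hb ξ, hb η, hb ζ, hb ω] with θ h1 h2 h3 h4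
    have e1 : (0:ℝ) ≤ C * ‖ξ‖ := le_trans (abs_nonneg _) h1
    have e2 : (0:ℝ) ≤ C * ‖η‖ := le_trans (abs_nonneg _) h2
    have e3 : (0:ℝ) ≤ C * ‖ζ‖ := le_trans (abs_nonneg _) h3
    rw [Real.norm_eq_abs, abs_mul, abs_mul, abs_mul]
    gcongr
  have hint_sq : ∀ ξ : Euc n, Integrable (fun θ => f ξ θ ^ 2) μ := by
    intro ξ
    have := hint2 ξ ξ
    simpa [sq] using this
  have hint_p4 : ∀ ξ : Euc n, Integrable (fun θ => f ξ θ ^ 4) μ := by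
    intro ξ
    have := hint4 ξ ξ ξ ξ
    have e : ∀ θ, f ξ θ * f ξ θ * f ξ θ * f ξ θ = f ξ θ ^ 4 := fun θ => by ring
    simpa [e] using this
  -- the operator T
  have hψint : ∀ ξ : Euc n, Integrable (fun θ => f ξ θ • φ θ) μ := by
    intro ξ
    refine Integrable.mono' (integrable_const ((C * ‖ξ‖) * C))
      ((hm ξ).aestronglyMeasurable.smul hφ.aestronglyMeasurable) ?_
    filter_upwards [hb ξ, hC] with θ h1 h2
    rw [norm_smul, Real.norm_eq_abs]
    have e1 : (0:ℝ) ≤ C * ‖ξ‖ := le_trans (abs_nonneg _) h1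
    exact mul_le_mul h1 h2 (norm_nonneg _) e1
  set T : Euc n →ₗ[ℝ] Euc n :=
    { toFun := fun ξ => ∫ θ, f ξ θ • φ θ ∂μ
      map_add' := by
        intro ξ η
        have e : ∀ θ, f (ξ + η) θ • φ θ = f ξ θ • φ θ + f η θ • φ θ := by
          intro θ
          simp only [hfdef, inner_add_right, add_smul]
        show (∫ θ, f (ξ + η) θ • φ θ ∂μ)
            = (∫ θ, f ξ θ • φ θ ∂μ) + ∫ θ, f η θ • φ θ ∂μ
        rw [integral_congr_ae (Filter.Eventually.of_forall e),
          integral_add (hψint ξ) (hψint η)]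
      map_smul' := by
        intro c ξ
        have e : ∀ θ, f (c • ξ) θ • φ θ = c • (f ξ θ • φ θ) := by
          intro θ
          simp only [hfdef, real_inner_smul_right, mul_smul]
        show (∫ θ, f (c • ξ) θ • φ θ ∂μ) = c • ∫ θ, f ξ θ • φ θ ∂μ
        rw [integral_congr_ae (Filter.Eventually.of_forall e), integral_smul] } with hTdef
  have hTinner : ∀ ξ η : Euc n, (inner ℝ (T ξ) η : ℝ) = ∫ θ, f ξ θ * f η θ ∂μ := by
    intro ξ η
    have hTval : T ξ = ∫ θ, f ξ θ • φ θ ∂μ := rfl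
    rw [real_inner_comm η (T ξ), hTval,
      show (inner ℝ η (∫ θ, f ξ θ • φ θ ∂μ) : ℝ) = (innerSL ℝ η) (∫ θ, f ξ θ • φ θ ∂μ) from rfl,
      ← ContinuousLinearMap.integral_comp_comm (innerSL ℝ η) (hψint ξ)]
    congr 1
    funext θ
    simp only [innerSL_apply_apply]
    rw [real_inner_smul_right, real_inner_comm]
  have hTsymm : T.IsSymmetric := by
    intro ξ η
    rw [hTinner, real_inner_comm (T η) ξ, hTinner]
    congr 1
    funext θ
    ring
  set b := hTsymm.eigenvectorBasis finrank_euclideanSpace_fin with hbdef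
  set lam := hTsymm.eigenvalues finrank_euclideanSpace_fin with hlamdef
  have happly : ∀ i, T (b i) = lam i • b i := fun i =>
    hTsymm.apply_eigenvectorBasis finrank_euclideanSpace_fin i
  have hnormb : ∀ i, ‖b i‖ = 1 := fun i => b.orthonormal.1 i
  have hlam : ∀ i, ∫ θ, f (b i) θ ^ 2 ∂μ = lam i := by
    intro i
    have h1 : (inner ℝ (T (b i)) (b i) : ℝ) = lam i := by
      rw [happly, real_inner_smul_left, real_inner_self_eq_norm_sq, hnormb]
      simp
    rw [← h1, hTinner]
    congr 1
    funext θ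
    ring
  have horth : ∀ i j, i ≠ j → ∫ θ, f (b i) θ * f (b j) θ ∂μ = 0 := by
    intro i j hij
    rw [← hTinner, happly, real_inner_smul_left, b.orthonormal.2 hij, mul_zero]
  have hlamnn : ∀ i, 0 ≤ lam i := by
    intro i
    rw [← hlam i]
    exact integral_nonneg fun θ => sq_nonneg _
  by_cases hzero : ∃ i, lam i = 0
  · obtain ⟨i, hi⟩ := hzero
    refine ⟨b i, hnormb i, ?_⟩
    rw [show (∫ θ, f (b i) θ ^ 2 ∂μ) = 0 from (hlam i).trans hi]
    have : (0:ℝ) ≤ ∫ θ, f (b i) θ ^ 4 ∂μ := by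
      apply integral_nonneg
      intro θ
      positivity
    simpa using this
  · push_neg at hzero
    have hlampos : ∀ i, 0 < lam i := fun i => (hlamnn i).lt_of_ne' (hzero i)
    have hnpos : (0:ℕ) < n := lt_of_lt_of_le two_pos hn
    haveI : Nonempty (Fin n) := ⟨⟨0, hnpos⟩⟩
    set κ : ℝ := 3 * (n : ℝ) / ((n : ℝ) + 2) with hκdef
    set sr : Fin n → ℝ := fun i => Real.sqrt (lam i) with hsrdef
    have hsrpos : ∀ i, 0 < sr i := fun i => Real.sqrt_pos.2 (hlampos i)
    have hsrsq : ∀ i, sr i ^ 2 = lam i := fun i => Real.sq_sqrt (hlamnn i)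
    set u : Fin n → Euc n := fun i => (sr i)⁻¹ • b i with hudef
    set w : (Fin n → Bool) → Euc n := fun ε => ∑ i, (sgn (ε i) * (sr i)⁻¹) • b i with hwdef
    have hfu : ∀ i θ, f (u i) θ = (sr i)⁻¹ * f (b i) θ := by
      intro i θ
      simp only [hfdef, hudef, real_inner_smul_right]
    have hfw : ∀ ε θ, f (w ε) θ = ∑ i, sgn (ε i) * f (u i) θ := by
      intro ε θ
      simp only [hfdef, hwdef, hudef, inner_sum, real_inner_smul_right]
      exact Finset.sum_congr rfl fun i _ => by ring
    -- diagonal integrals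
    have huu : ∀ i j, (∫ θ, f (u i) θ * f (u j) θ ∂μ) = if i = j then 1 else 0 := by
      intro i j
      have e : ∀ θ, f (u i) θ * f (u j) θ
          = ((sr i)⁻¹ * (sr j)⁻¹) * (f (b i) θ * f (b j) θ) := by
        intro θ; rw [hfu, hfu]; ring
      rw [integral_congr_ae (Filter.Eventually.of_forall e), integral_const_mul]
      by_cases hij : i = j
      · subst hij
        have e2 : (∫ θ, f (b i) θ * f (b i) θ ∂μ) = lam i := by
          rw [← hlam i]
          congr 1; funext θ; ring
        rw [e2, if_pos rfl]
        have : (sr i) ≠ 0 := (hsrpos i).ne'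
        field_simp
        rw [← hsrsq i]
      · rw [horth i j hij, if_neg hij, mul_zero]
    have hexp : ∀ c : Fin n → ℝ,
        (∫ θ, (∑ i, c i * f (u i) θ) ^ 2 ∂μ) = ∑ i, (c i) ^ 2 := by
      intro c
      have e : ∀ θ, (∑ i, c i * f (u i) θ) ^ 2
          = ∑ i, ∑ j, (c i * c j) * (f (u i) θ * f (u j) θ) := by
        intro θ
        rw [sq, Finset.sum_mul_sum]
        exact Finset.sum_congr rfl fun i _ => Finset.sum_congr rfl fun j _ => by ring
      rw [integral_congr_ae (Filter.Eventually.of_forall e),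
        integral_finset_sum _ (fun i _ => integrable_finset_sum _
          (fun j _ => (hint2 (u i) (u j)).const_mul _))]
      have e2 : ∀ i, (∫ θ, ∑ j, (c i * c j) * (f (u i) θ * f (u j) θ) ∂μ) = (c i) ^ 2 := by
        intro i
        rw [integral_finset_sum _ (fun j _ => (hint2 (u i) (u j)).const_mul _)]
        have e3 : ∀ j, (∫ θ, (c i * c j) * (f (u i) θ * f (u j) θ) ∂μ)
            = (c i * c j) * if i = j then 1 else 0 := by
          intro j; rw [integral_const_mul, huu]
        simp only [e3, mul_ite, mul_one, mul_zero]
        rw [Finset.sum_ite_eq Finset.univ i (fun j => c i * c j), if_pos (Finset.mem_univ i)]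
        ring
      exact Finset.sum_congr rfl fun i _ => e2 i
    have hmu : ∀ i, (∫ θ, f (u i) θ ^ 2 ∂μ) = 1 := by
      intro i
      have := huu i i
      rw [if_pos rfl] at this
      rw [← this]
      congr 1; funext θ; ring
    have hmw : ∀ ε, (∫ θ, f (w ε) θ ^ 2 ∂μ) = n := by
      intro ε
      have e : ∀ θ, f (w ε) θ ^ 2 = (∑ i, sgn (ε i) * f (u i) θ) ^ 2 := by
        intro θ; rw [hfw]
      rw [integral_congr_ae (Filter.Eventually.of_forall e), hexp (fun i => sgn (ε i))]
      simp [sgn_sq]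
    -- the function ρ and Cauchy-Schwarz
    set ρ : Euc n → ℝ := fun θ => ∑ i, f (u i) θ ^ 2 with hρdef
    have hρint : Integrable ρ μ := integrable_finset_sum _ fun i _ => hint_sq (u i)
    have hρsq : ∀ θ, ρ θ ^ 2 = ∑ i, ∑ j, f (u i) θ * f (u i) θ * (f (u j) θ * f (u j) θ) := by
      intro θ
      rw [hρdef, sq, Finset.sum_mul_sum]
      exact Finset.sum_congr rfl fun i _ => Finset.sum_congr rfl fun j _ => by ring
    have hρ2int : Integrable (fun θ => ρ θ ^ 2) μ := by
      rw [show (fun θ => ρ θ ^ 2)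
          = fun θ => ∑ i, ∑ j, f (u i) θ * f (u i) θ * (f (u j) θ * f (u j) θ) from
        funext hρsq]
      refine integrable_finset_sum _ fun i _ => integrable_finset_sum _ fun j _ => ?_
      have := hint4 (u i) (u i) (u j) (u j)
      have e : ∀ θ, f (u i) θ * f (u i) θ * f (u j) θ * f (u j) θ
          = f (u i) θ * f (u i) θ * (f (u j) θ * f (u j) θ) := fun θ => by ring
      simpa [e] using this
    have hρ1 : (∫ θ, ρ θ ∂μ) = n := by
      rw [hρdef, integral_finset_sum _ (fun i _ => hint_sq (u i))]
      simp [hmu]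
    have hCS : (n:ℝ) ^ 2 ≤ V * ∫ θ, ρ θ ^ 2 ∂μ := by
      have := cs_var μ ρ hρint hρ2int
      rwa [hρ1, ← hVdef] at this
    -- pointwise design identity
    have hdesign : ∀ θ, 2 * (∑ i, f (u i) θ ^ 4)
        + ((2:ℝ) ^ n)⁻¹ * (∑ ε : Fin n → Bool, f (w ε) θ ^ 4) = 3 * ρ θ ^ 2 := by
      intro θ
      have hw4 : ∀ ε : Fin n → Bool, f (w ε) θ ^ 4
          = (∑ i, sgn (ε i) * f (u i) θ) ^ 4 := by
        intro ε; rw [hfw]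
      simp only [hw4]
      rw [rad4 n (fun i => f (u i) θ), hρdef]
      have h2n : ((2:ℝ) ^ n) ≠ 0 := by positivity
      rw [inv_mul_cancel_left₀ h2n]
      ring
    -- integrated design identity
    have hA : (∫ θ, (∑ i, f (u i) θ ^ 4) ∂μ) = ∑ i, ∫ θ, f (u i) θ ^ 4 ∂μ :=
      integral_finset_sum _ fun i _ => hint_p4 (u i)
    have hB : (∫ θ, (∑ ε : Fin n → Bool, f (w ε) θ ^ 4) ∂μ)
        = ∑ ε : Fin n → Bool, ∫ θ, f (w ε) θ ^ 4 ∂μ :=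
      integral_finset_sum _ fun ε _ => hint_p4 (w ε)
    have hintA : Integrable (fun θ => ∑ i, f (u i) θ ^ 4) μ :=
      integrable_finset_sum _ fun i _ => hint_p4 (u i)
    have hintB : Integrable (fun θ => ∑ ε : Fin n → Bool, f (w ε) θ ^ 4) μ :=
      integrable_finset_sum _ fun ε _ => hint_p4 (w ε)
    have hINT : 2 * (∑ i, ∫ θ, f (u i) θ ^ 4 ∂μ)
        + ((2:ℝ) ^ n)⁻¹ * (∑ ε : Fin n → Bool, ∫ θ, f (w ε) θ ^ 4 ∂μ)
        = 3 * ∫ θ, ρ θ ^ 2 ∂μ := by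
      have e1 : (∫ θ, (2 * (∑ i, f (u i) θ ^ 4)
            + ((2:ℝ) ^ n)⁻¹ * (∑ ε : Fin n → Bool, f (w ε) θ ^ 4)) ∂μ)
          = ∫ θ, 3 * ρ θ ^ 2 ∂μ :=
        integral_congr_ae (Filter.Eventually.of_forall hdesign)
      rw [integral_add (hintA.const_mul 2) (hintB.const_mul _), integral_const_mul,
        integral_const_mul, integral_const_mul, hA, hB] at e1
      exact e1
    -- contradiction argument
    by_contra hcon
    push_neg at hcon
    have hstrict : ∀ ζ : Euc n, ζ ≠ 0 →
        V * (∫ θ, f ζ θ ^ 4 ∂μ) < κ * (∫ θ, f ζ θ ^ 2 ∂μ) ^ 2 := by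
      intro ζ hζ0
      set c : ℝ := ‖ζ‖⁻¹ with hcdef
      have hcpos : 0 < c := inv_pos.2 (norm_pos_iff.2 hζ0)
      have hnorm1 : ‖c • ζ‖ = 1 := by
        rw [norm_smul, Real.norm_eq_abs, abs_of_pos hcpos, hcdef,
          inv_mul_cancel₀ (norm_pos_iff.2 hζ0).ne']
      have hf2 : (∫ θ, f (c • ζ) θ ^ 2 ∂μ) = c ^ 2 * ∫ θ, f ζ θ ^ 2 ∂μ := by
        have e : ∀ θ, f (c • ζ) θ ^ 2 = c ^ 2 * f ζ θ ^ 2 := by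
          intro θ
          simp only [hfdef, real_inner_smul_right]
          ring
        rw [integral_congr_ae (Filter.Eventually.of_forall e), integral_const_mul]
      have hf4 : (∫ θ, f (c • ζ) θ ^ 4 ∂μ) = c ^ 4 * ∫ θ, f ζ θ ^ 4 ∂μ := by
        have e : ∀ θ, f (c • ζ) θ ^ 4 = c ^ 4 * f ζ θ ^ 4 := by
          intro θ
          simp only [hfdef, real_inner_smul_right]
          ring
        rw [integral_congr_ae (Filter.Eventually.of_forall e), integral_const_mul]
      have h := hcon (c • ζ) hnorm1
      rw [hf2, hf4] at h
      -- h : c^4 * G < κ * (c^2 * M)^2 / V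
      have h2 : (c ^ 4 * ∫ θ, f ζ θ ^ 4 ∂μ) * V < κ * (c ^ 2 * ∫ θ, f ζ θ ^ 2 ∂μ) ^ 2 :=
        (lt_div_iff₀ hV).mp h
      have hc4 : 0 < c ^ 4 := by positivity
      nlinarith [h2, hc4]
    have hu0 : ∀ i, u i ≠ 0 := by
      intro i h
      have hb0 : b i ≠ 0 := by
        intro hb0
        have := hnormb i
        rw [hb0, norm_zero] at this
        norm_num at this
      rw [hudef] at h
      simp only [smul_eq_zero] at h
      rcases h with h | h
      · exact (inv_ne_zero (hsrpos i).ne') h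
      · exact hb0 h
    have hw0 : ∀ ε : Fin n → Bool, w ε ≠ 0 := by
      intro ε h
      have hi0 : (inner ℝ (b ⟨0, hnpos⟩) (w ε) : ℝ) = sgn (ε ⟨0, hnpos⟩) * (sr ⟨0, hnpos⟩)⁻¹ := by
        rw [hwdef]
        rw [b.orthonormal.inner_right_fintype]
      rw [h, inner_zero_right] at hi0
      have hsgn : sgn (ε ⟨0, hnpos⟩) ≠ 0 := by cases (ε ⟨0, hnpos⟩) <;> simp [sgn]
      exact (mul_ne_zero hsgn (inv_ne_zero (hsrpos _).ne')) hi0.symm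
    -- sum up the strict inequalities
    have h1 : V * (∑ i, ∫ θ, f (u i) θ ^ 4 ∂μ) < κ * n := by
      have := Finset.sum_lt_sum_of_nonempty Finset.univ_nonempty
        (f := fun i => V * ∫ θ, f (u i) θ ^ 4 ∂μ) (g := fun _ => κ)
        (fun i _ => by
          have := hstrict (u i) (hu0 i)
          rwa [hmu i, one_pow, mul_one] at this)
      rw [Finset.sum_const, Finset.card_univ, Fintype.card_fin, nsmul_eq_mul] at this
      rw [Finset.mul_sum]
      calc (∑ i, V * ∫ θ, f (u i) θ ^ 4 ∂μ) < (n:ℝ) * κ := this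
        _ = κ * n := by ring
    have h2 : V * (∑ ε : Fin n → Bool, ∫ θ, f (w ε) θ ^ 4 ∂μ) < 2 ^ n * (κ * n ^ 2) := by
      have := Finset.sum_lt_sum_of_nonempty Finset.univ_nonempty
        (f := fun ε : Fin n → Bool => V * ∫ θ, f (w ε) θ ^ 4 ∂μ)
        (g := fun _ => κ * n ^ 2)
        (fun ε _ => by
          have := hstrict (w ε) (hw0 ε)
          rwa [hmw ε] at this)
      rw [Finset.sum_const, Finset.card_univ, Fintype.card_fun, Fintype.card_bool,
        Fintype.card_fin, nsmul_eq_mul] at this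
      rw [Finset.mul_sum]
      push_cast at this ⊢
      linarith
    -- combine with hINT and hCS
    have h2n : (0:ℝ) < 2 ^ n := by positivity
    have hκn : κ * (2 * n + n ^ 2) = 3 * n ^ 2 := by
      rw [hκdef]
      have : ((n:ℝ) + 2) ≠ 0 := by positivity
      field_simp
      ring
    set X : ℝ := ∑ i, ∫ θ, f (u i) θ ^ 4 ∂μ with hXdef
    set Y : ℝ := ∑ ε : Fin n → Bool, ∫ θ, f (w ε) θ ^ 4 ∂μ with hYdef
    set R : ℝ := ∫ θ, ρ θ ^ 2 ∂μ with hRdef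
    have hi : (0:ℝ) < ((2:ℝ) ^ n)⁻¹ := by positivity
    have hcancel : ((2:ℝ) ^ n)⁻¹ * (2:ℝ) ^ n = 1 := inv_mul_cancel₀ (by positivity)
    have h2'' : ((2:ℝ) ^ n)⁻¹ * (V * Y) < κ * (n:ℝ) ^ 2 := by
      calc ((2:ℝ) ^ n)⁻¹ * (V * Y)
          < ((2:ℝ) ^ n)⁻¹ * ((2:ℝ) ^ n * (κ * (n:ℝ) ^ 2)) := mul_lt_mul_of_pos_left h2 hi
        _ = κ * (n:ℝ) ^ 2 := by
            rw [← mul_assoc ((2:ℝ) ^ n)⁻¹ ((2:ℝ) ^ n), hcancel, one_mul]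
    have hVR : 3 * (V * R) = 2 * (V * X) + ((2:ℝ) ^ n)⁻¹ * (V * Y) := by
      have : V * (2 * X + ((2:ℝ) ^ n)⁻¹ * Y) = V * (3 * R) := by rw [hINT]
      nlinarith [this]
    nlinarith [hCS, h1, h2'', hκn, hVR]


set_option maxHeartbeats 1000000 in
/-- **Theorem 1.2 (existence of a good direction).** For every convex body `K` containing the
origin in its interior, there is `ξ ∈ S^{n-1}` with
`∫ lin_{K,ξ}⁴ dV_K ≥ (3n/(n+2)) (∫ lin_{K,ξ}² dV_K)² / V(K)`. -/
theorem good_direction_exists {n : ℕ} (hn : 2 ≤ n) (K : Set (Euc n)) (hK : IsBody K) :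
    ∃ ξ ∈ sph n,
      3 * (n : ℝ) / ((n : ℝ) + 2) * (∫ θ, linK K ξ θ ^ 2 ∂coneVol K) ^ 2 / vol K ≤
        ∫ θ, linK K ξ θ ^ 4 ∂coneVol K := by
  classical
  obtain ⟨hconv, hcomp, h0⟩ := hK
  -- a small ball inside K
  obtain ⟨r, hr, hball⟩ : ∃ r > 0, Metric.ball (0 : Euc n) r ⊆ K := by
    obtain ⟨r, hr, h⟩ := Metric.mem_nhds_iff.mp (mem_interior_iff_mem_nhds.mp h0)
    exact ⟨r, hr, h⟩
  -- K is bounded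
  obtain ⟨R₀, hR₀⟩ := hcomp.isBounded.subset_closedBall 0
  set R : ℝ := max R₀ 0 with hRdef
  have hRnn : 0 ≤ R := le_max_right _ _
  have hR : ∀ y ∈ K, ‖y‖ ≤ R := by
    intro y hy
    have := hR₀ hy
    rw [Metric.mem_closedBall, dist_zero_right] at this
    exact this.trans (le_max_left _ _)
  have hKne : K.Nonempty := ⟨0, interior_subset h0⟩
  -- support function basics
  have hbdd : ∀ x : Euc n, BddAbove ((fun y => (inner ℝ x y : ℝ)) '' K) := by
    intro x
    refine ⟨‖x‖ * R, ?_⟩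
    rintro _ ⟨y, hy, rfl⟩
    exact (real_inner_le_norm x y).trans
      (mul_le_mul_of_nonneg_left (hR y hy) (norm_nonneg x))
  have hsupp_ge : ∀ (x y : Euc n), y ∈ K → (inner ℝ x y : ℝ) ≤ suppFn K x :=
    fun x y hy => le_csSup (hbdd x) ⟨y, hy, rfl⟩
  have hsupp_le : ∀ (x : Euc n) (c : ℝ), (∀ y ∈ K, (inner ℝ x y : ℝ) ≤ c) →
      suppFn K x ≤ c := by
    intro x c hc
    exact csSup_le (hKne.image _) (by rintro _ ⟨y, hy, rfl⟩; exact hc y hy)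
  -- Lipschitz continuity of the support function
  have hlip_aux : ∀ x y : Euc n, suppFn K x ≤ suppFn K y + R * ‖x - y‖ := by
    intro x y
    refine hsupp_le x _ fun z hz => ?_
    have e : (inner ℝ x z : ℝ) = (inner ℝ y z : ℝ) + (inner ℝ (x - y) z : ℝ) := by
      rw [inner_sub_left]; ring
    rw [e]
    have h1 : (inner ℝ y z : ℝ) ≤ suppFn K y := hsupp_ge y z hz
    have h2 : (inner ℝ (x - y) z : ℝ) ≤ R * ‖x - y‖ := by
      calc (inner ℝ (x - y) z : ℝ) ≤ ‖x - y‖ * ‖z‖ := real_inner_le_norm _ _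
        _ ≤ ‖x - y‖ * R := mul_le_mul_of_nonneg_left (hR z hz) (norm_nonneg _)
        _ = R * ‖x - y‖ := by ring
    linarith
  have hsuppcont : Continuous (suppFn K) := by
    refine (LipschitzWith.of_dist_le_mul (K := Real.toNNReal R) (f := suppFn K) ?_).continuous
    intro x y
    rw [Real.dist_eq, Real.coe_toNNReal R hRnn, dist_eq_norm]
    rw [abs_sub_le_iff]
    constructor
    · have := hlip_aux x y; linarith
    · have := hlip_aux y x
      rw [show ‖y - x‖ = ‖x - y‖ from norm_sub_rev y x] at this
      linarith
  have hmeas_supp : Measurable (suppFn K) := hsuppcont.measurable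
  -- the normalized position map φ
  set φ : Euc n → Euc n := fun θ => (suppFn K θ)⁻¹ • θ with hφdef
  have hφm : Measurable φ := (hmeas_supp.inv).smul measurable_id
  have hlin : ∀ ξ θ : Euc n, linK K ξ θ = (inner ℝ (φ θ) ξ : ℝ) := by
    intro ξ θ
    rw [linK, hφdef]
    simp only [real_inner_smul_left]
    rw [div_eq_inv_mul]
  -- measurability of the Gauss map
  have hgrad : Measurable (fun x : Euc n => gradient (gauge K) x) := by
    have h1 : Measurable (fderiv ℝ (gauge K)) := measurable_fderiv ℝ _
    have h2 : (fun x : Euc n => gradient (gauge K) x)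
        = fun x => (InnerProductSpace.toDual ℝ (Euc n)).symm (fderiv ℝ (gauge K) x) := rfl
    rw [h2]
    exact (InnerProductSpace.toDual ℝ (Euc n)).symm.continuous.measurable.comp h1
  have hgauss : Measurable (gaussMap K) := by
    have h2 : gaussMap K = fun x =>
        ‖gradient (gauge K) x‖⁻¹ • gradient (gauge K) x := rfl
    rw [h2]
    exact (hgrad.norm.inv).smul hgrad
  -- total mass of the cone-volume measure
  have huniv : coneVol K Set.univ = volume K := by
    rw [coneVol, Measure.map_apply hgauss MeasurableSet.univ, Set.preimage_univ,
      Measure.restrict_apply_univ]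
  haveI hfin : IsFiniteMeasure (coneVol K) := by
    constructor
    rw [huniv]
    exact hcomp.measure_lt_top
  have hV : 0 < (coneVol K Set.univ).toReal := by
    rw [huniv]
    refine ENNReal.toReal_pos ?_ hcomp.measure_lt_top.ne
    have h1 : (0:ℝ≥0∞) < volume (Metric.ball (0 : Euc n) r) :=
      Metric.measure_ball_pos volume 0 hr
    exact ((h1.trans_le (measure_mono hball))).ne'
  -- a.e., θ lies on the unit sphere or is zero
  set S : Set (Euc n) := Metric.sphere 0 1 ∪ {0} with hSdef
  have hrange : ∀ x, gaussMap K x ∈ S := by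
    intro x
    by_cases hgx : gradient (gauge K) x = 0
    · right
      simp [gaussMap, hgx]
    · left
      rw [mem_sphere_zero_iff_norm, gaussMap, norm_smul, Real.norm_eq_abs, abs_inv,
        abs_norm, inv_mul_cancel₀ (norm_ne_zero_iff.mpr hgx)]
  have hSmeas : MeasurableSet S :=
    (Metric.isClosed_sphere.measurableSet).union (measurableSet_singleton 0)
  have haes : ∀ᵐ θ ∂coneVol K, θ ∈ S := by
    rw [ae_iff]
    have he : {θ : Euc n | ¬ θ ∈ S} = Sᶜ := rfl
    rw [he, coneVol, Measure.map_apply hgauss hSmeas.compl]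
    have hpre : (gaussMap K)⁻¹' Sᶜ = ∅ := by
      ext x
      simp only [Set.mem_preimage, Set.mem_compl_iff, Set.mem_empty_iff_false, iff_false,
        not_not]
      exact hrange x
    rw [hpre]
    simp
  -- the a.e. bound on φ
  have hCb : ∀ᵐ θ ∂coneVol K, ‖φ θ‖ ≤ 2 / r := by
    filter_upwards [haes] with θ hθ
    rcases hθ with hθ | hθ
    · -- θ on the unit sphere
      rw [mem_sphere_zero_iff_norm] at hθ
      have hhalf : (r/2) • θ ∈ K := by
        apply hball
        rw [Metric.mem_ball, dist_zero_right, norm_smul, Real.norm_eq_abs,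
          abs_of_pos (by linarith : (0:ℝ) < r/2), hθ, mul_one]
        linarith
      have hsθ : r/2 ≤ suppFn K θ := by
        have := hsupp_ge θ ((r/2) • θ) hhalf
        rwa [real_inner_smul_right, real_inner_self_eq_norm_sq, hθ, one_pow, mul_one] at this
      have hpos : 0 < suppFn K θ := lt_of_lt_of_le (by linarith) hsθ
      rw [hφdef]
      simp only
      rw [norm_smul, Real.norm_eq_abs, abs_inv, abs_of_pos hpos, hθ, mul_one]
      rw [show (2:ℝ)/r = (r/2)⁻¹ by rw [inv_div]]
      exact inv_anti₀ (by linarith) hsθ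
    · -- θ = 0
      rw [Set.mem_singleton_iff] at hθ
      rw [hθ, hφdef]
      simp only [smul_zero, norm_zero]
      positivity
  -- apply the core lemma
  obtain ⟨ξ, hξ1, hineq⟩ := core hn (coneVol K) φ hφm (2/r) hCb hV
  refine ⟨ξ, ?_, ?_⟩
  · rw [sph, mem_sphere_zero_iff_norm]
    exact hξ1
  · have e2 : (∫ θ, linK K ξ θ ^ 2 ∂coneVol K) = ∫ θ, (inner ℝ (φ θ) ξ : ℝ) ^ 2 ∂coneVol K := by
      congr 1
      funext θ
      rw [hlin]
    have e4 : (∫ θ, linK K ξ θ ^ 4 ∂coneVol K) = ∫ θ, (inner ℝ (φ θ) ξ : ℝ) ^ 4 ∂coneVol K := by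
      congr 1
      funext θ
      rw [hlin]
    have ev : vol K = (coneVol K Set.univ).toReal := by
      rw [vol, huniv]
    rw [e2, e4, ev]
    exact hineq
end

section
/- Let K ⊂ ℝⁿ (n ≥ 2) be a convex body containing the origin in its interior with (1/R)·B₂ⁿ ⊆ K for some R > 0, let p be a positive even integer, and let ξ ∈ S^{n−1}. Then the function ℝⁿ ∋ x ↦ (p−1)R^p · h_K(x) + ⟨x,ξ⟩^p / h_K(x)^{p−1} (set to 0 at the origin) is convex, positively 1-homogeneous and positive outside the origin; hence it is the support function of a convex body containing the origin in its interior. -/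
open MeasureTheory Set Filter
open scoped Pointwise ENNReal NNReal Topology

section AuxLemmas

variable {n : ℕ}

lemma inner_le_suppFn {K : Set (Euc n)} (hK : IsCompact K) (x : Euc n) {y : Euc n}
    (hy : y ∈ K) : (inner ℝ x y : ℝ) ≤ suppFn K x :=
  le_csSup ((hK.image (continuous_const.inner continuous_id)).bddAbove)
    (Set.mem_image_of_mem _ hy)

lemma exists_suppFn_eq {K : Set (Euc n)} (hK : IsCompact K) (hne : K.Nonempty) (x : Euc n) :
    ∃ y ∈ K, suppFn K x = (inner ℝ x y : ℝ) := by
  have hc : ContinuousOn (fun y : Euc n => (inner ℝ x y : ℝ)) K :=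
    (continuous_const.inner continuous_id).continuousOn
  obtain ⟨y, hyK, hymax⟩ := hK.exists_isMaxOn hne hc
  refine ⟨y, hyK, IsGreatest.csSup_eq ⟨Set.mem_image_of_mem _ hyK, ?_⟩⟩
  rintro r ⟨z, hz, rfl⟩
  exact hymax hz

lemma suppFn_zero {K : Set (Euc n)} (hne : K.Nonempty) : suppFn K (0 : Euc n) = 0 := by
  have : (fun y => (inner ℝ (0 : Euc n) y : ℝ)) '' K = ((fun _ => (0:ℝ)) '' K) := by
    apply Set.image_congr
    intro y _
    exact inner_zero_left y
  rw [suppFn, this, Set.Nonempty.image_const hne]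
  exact csSup_singleton 0

lemma suppFn_smul {K : Set (Euc n)} (hK : IsCompact K) (hne : K.Nonempty) {t : ℝ}
    (ht : 0 ≤ t) (x : Euc n) : suppFn K (t • x) = t * suppFn K x := by
  rcases ht.eq_or_lt with rfl | ht'
  · simp [suppFn_zero hne]
  apply le_antisymm
  · apply csSup_le (hne.image _)
    rintro r ⟨y, hy, rfl⟩
    show (inner ℝ (t • x) y : ℝ) ≤ t * suppFn K x
    rw [real_inner_smul_left]
    exact mul_le_mul_of_nonneg_left (inner_le_suppFn hK x hy) ht
  · obtain ⟨y, hy, hyeq⟩ := exists_suppFn_eq hK hne x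
    calc t * suppFn K x = (inner ℝ (t • x) y : ℝ) := by rw [hyeq, real_inner_smul_left]
    _ ≤ suppFn K (t • x) := inner_le_suppFn hK _ hy

lemma suppFn_add_le {K : Set (Euc n)} (hK : IsCompact K) (hne : K.Nonempty) (x y : Euc n) :
    suppFn K (x + y) ≤ suppFn K x + suppFn K y := by
  obtain ⟨z, hz, hzeq⟩ := exists_suppFn_eq hK hne (x + y)
  rw [hzeq, inner_add_left]
  exact add_le_add (inner_le_suppFn hK x hz) (inner_le_suppFn hK y hz)

lemma norm_le_suppFn {K : Set (Euc n)} {R : ℝ} (hK : IsCompact K) (hR : 0 < R)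
    (hball : R⁻¹ • Metric.closedBall (0 : Euc n) 1 ⊆ K) (x : Euc n) :
    R⁻¹ * ‖x‖ ≤ suppFn K x := by
  rcases eq_or_ne x 0 with rfl | hx
  · have h0K : (0 : Euc n) ∈ K := by
      have : (0 : Euc n) = R⁻¹ • (0 : Euc n) := by simp
      exact hball ⟨0, Metric.mem_closedBall_self zero_le_one, this.symm⟩
    simpa using inner_le_suppFn hK 0 h0K
  · have hxn : ‖x‖ ≠ 0 := norm_ne_zero_iff.mpr hx
    have hyK : R⁻¹ • (‖x‖⁻¹ • x) ∈ K := by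
      apply hball
      refine Set.smul_mem_smul_set ?_
      rw [Metric.mem_closedBall, dist_zero_right, norm_smul, norm_inv, norm_norm,
        inv_mul_cancel₀ hxn]
    have := inner_le_suppFn hK x hyK
    rwa [real_inner_smul_right, real_inner_smul_right, real_inner_self_eq_norm_mul_norm,
      inv_mul_cancel_left₀ hxn] at this

lemma suppFn_le_mul_norm {K : Set (Euc n)} (hK : IsCompact K) (hne : K.Nonempty) {M : ℝ}
    (hM : K ⊆ Metric.closedBall 0 M) (x : Euc n) : suppFn K x ≤ M * ‖x‖ := by
  apply csSup_le (hne.image _)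
  rintro r ⟨y, hy, rfl⟩
  have hyM : ‖y‖ ≤ M := by simpa [Metric.mem_closedBall, dist_zero_right] using hM hy
  calc (inner ℝ x y : ℝ) ≤ ‖x‖ * ‖y‖ := real_inner_le_norm x y
  _ ≤ ‖x‖ * M := mul_le_mul_of_nonneg_left hyM (norm_nonneg x)
  _ = M * ‖x‖ := mul_comm _ _

/-- tangent line inequality for `t ↦ t^p` at `b'`. -/
lemma pow_tangent {p : ℕ} (hp : 0 < p) {b b' : ℝ} (hb : 0 < b) (hb' : 0 < b') :
    (p : ℝ) * b * b' ^ (p - 1) - ((p : ℝ) - 1) * (b' ^ (p - 1) * b') ≤ b ^ p := by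
  set u : ℝ := b / b' with hu
  have hb'0 : b' ≠ 0 := hb'.ne'
  have hu0 : 0 < u := div_pos hb hb'
  have hber : 1 + (p : ℝ) * (u - 1) ≤ u ^ p := one_add_mul_sub_le_pow (by linarith) p
  have hB : (0 : ℝ) < b' ^ (p - 1) * b' := by positivity
  have hbu : b = u * b' := by rw [hu, div_mul_cancel₀ b hb'0]
  have hbp : b ^ p = u ^ p * (b' ^ (p - 1) * b') := by
    rw [hbu, mul_pow, pow_sub_one_mul hp.ne' b']
  rw [hbp, hbu]
  calc (p : ℝ) * (u * b') * b' ^ (p - 1) - ((p : ℝ) - 1) * (b' ^ (p - 1) * b')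
      = (1 + (p : ℝ) * (u - 1)) * (b' ^ (p - 1) * b') := by ring
  _ ≤ u ^ p * (b' ^ (p - 1) * b') := mul_le_mul_of_nonneg_right hber hB.le

/-- Monotonicity of `b ↦ (p-1)R^p b + a^p/b^(p-1)` on `{|a| ≤ R b}`. -/
lemma ratio_pow_mono {p : ℕ} (hpe : Even p) (hp : 0 < p) {R a b b' : ℝ} (hR : 0 < R)
    (hb : 0 < b) (hbb' : b ≤ b') (ha : |a| ≤ R * b) :
    ((p:ℝ)-1) * R^p * b + a^p / b^(p-1) ≤ ((p:ℝ)-1) * R^p * b' + a^p / b'^(p-1) := by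
  have hb' : 0 < b' := hb.trans_le hbb'
  have hp1 : (1:ℝ) ≤ (p:ℝ) := by exact_mod_cast hp
  have hq : (0:ℝ) < b ^ (p-1) := by positivity
  have hq' : (0:ℝ) < b' ^ (p-1) := by positivity
  have key1 : a ^ p ≤ R ^ p * b ^ p := by
    calc a ^ p = |a| ^ p := (hpe.pow_abs a).symm
    _ ≤ (R * b) ^ p := pow_le_pow_left₀ (abs_nonneg a) ha p
    _ = R ^ p * b ^ p := mul_pow R b p
  have hann : 0 ≤ a ^ p := hpe.pow_nonneg a
  have hqq : b ^ (p-1) ≤ b' ^ (p-1) := pow_le_pow_left₀ hb.le hbb' _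
  have h1 : a^p / b^(p-1) - a^p / b'^(p-1) = a^p * ((b'^(p-1) - b^(p-1))/(b^(p-1) * b'^(p-1))) := by
    field_simp
  have hfac : 0 ≤ (b'^(p-1) - b^(p-1))/(b^(p-1) * b'^(p-1)) :=
    div_nonneg (by linarith) (by positivity)
  have h2 : a^p * ((b'^(p-1) - b^(p-1))/(b^(p-1) * b'^(p-1)))
      ≤ (R^p * b^p) * ((b'^(p-1) - b^(p-1))/(b^(p-1) * b'^(p-1))) :=
    mul_le_mul_of_nonneg_right key1 hfac
  have eb : b ^ p = b ^ (p-1) * b := (pow_sub_one_mul hp.ne' b).symm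
  have h3 : (R^p * b^p) * ((b'^(p-1) - b^(p-1))/(b^(p-1) * b'^(p-1)))
      = R^p * (b - b^p/b'^(p-1)) := by
    rw [eb]
    field_simp
  have h4 : (p : ℝ) * b - ((p:ℝ)-1) * b' ≤ b ^ p / b' ^ (p-1) := by
    have hpt := pow_tangent hp hb hb'
    rw [← sub_nonneg]
    have h5 : 0 ≤ (b ^ p - ((p : ℝ) * b * b' ^ (p - 1) - ((p : ℝ) - 1) * (b' ^ (p - 1) * b'))) / b' ^ (p-1) :=
      div_nonneg (by linarith) hq'.le
    calc (0:ℝ) ≤ (b ^ p - ((p : ℝ) * b * b' ^ (p - 1) - ((p : ℝ) - 1) * (b' ^ (p - 1) * b'))) / b' ^ (p-1) := h5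
    _ = b ^ p / b' ^ (p-1) - ((p : ℝ) * b - ((p:ℝ)-1) * b') := by field_simp
  nlinarith [mul_le_mul_of_nonneg_left h4 (by positivity : (0:ℝ) ≤ R ^ p)]

/-- Joint convexity of `(a,b) ↦ a^p / b^(p-1)` on `ℝ × (0,∞)`. -/
lemma ratio_pow_convex {p : ℕ} (hpe : Even p) (hp : 0 < p) {a1 a2 b1 b2 lam mu : ℝ}
    (hb1 : 0 < b1) (hb2 : 0 < b2) (hlam : 0 ≤ lam) (hmu : 0 ≤ mu) (hs : lam + mu = 1) :
    (lam*a1 + mu*a2)^p / (lam*b1 + mu*b2)^(p-1)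
      ≤ lam * (a1^p/b1^(p-1)) + mu * (a2^p/b2^(p-1)) := by
  have hb : 0 < lam*b1 + mu*b2 := by
    rcases hlam.eq_or_lt with rfl | hlam'
    · simp only [zero_mul, zero_add]
      have : mu = 1 := by linarith
      rw [this, one_mul]; exact hb2
    · have : 0 ≤ mu * b2 := mul_nonneg hmu hb2.le
      nlinarith
  set b : ℝ := lam*b1 + mu*b2 with hbdef
  have hw1 : (0:ℝ) ≤ lam*b1/b := div_nonneg (mul_nonneg hlam hb1.le) hb.le
  have hw2 : (0:ℝ) ≤ mu*b2/b := div_nonneg (mul_nonneg hmu hb2.le) hb.le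
  have hws : lam*b1/b + mu*b2/b = 1 := by
    rw [← add_div, hbdef, div_self hb.ne']
  have hw := (Even.convexOn_pow hpe).2 (Set.mem_univ (a1/b1)) (Set.mem_univ (a2/b2)) hw1 hw2 hws
  simp only [smul_eq_mul] at hw
  have E1 : lam*b1/b * (a1/b1) + mu*b2/b * (a2/b2) = (lam*a1 + mu*a2)/b := by
    field_simp
  have eb : b ^ p = b ^ (p-1) * b := (pow_sub_one_mul hp.ne' b).symm
  have eb1 : b1 ^ p = b1 ^ (p-1) * b1 := (pow_sub_one_mul hp.ne' b1).symm
  have eb2 : b2 ^ p = b2 ^ (p-1) * b2 := (pow_sub_one_mul hp.ne' b2).symm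
  have E3 : ((lam*a1 + mu*a2)/b)^p * b = (lam*a1 + mu*a2)^p / b^(p-1) := by
    rw [div_pow, eb]
    field_simp
  have E2 : (lam*b1/b * (a1/b1)^p + mu*b2/b * (a2/b2)^p) * b
      = lam * (a1^p/b1^(p-1)) + mu * (a2^p/b2^(p-1)) := by
    rw [div_pow, div_pow, eb1, eb2]
    field_simp
  calc (lam*a1 + mu*a2)^p / b^(p-1) = ((lam*a1 + mu*a2)/b)^p * b := E3.symm
  _ = (lam*b1/b * (a1/b1) + mu*b2/b * (a2/b2))^p * b := by rw [E1]
  _ ≤ (lam*b1/b * (a1/b1)^p + mu*b2/b * (a2/b2)^p) * b :=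
      mul_le_mul_of_nonneg_right hw hb.le
  _ = _ := E2

end AuxLemmas

section Sublinear

variable {n : ℕ}

lemma exists_body_of_sublinear (g : Euc n → ℝ) (gconv : ConvexOn ℝ Set.univ g)
    (ghom : ∀ t : ℝ, 0 < t → ∀ x : Euc n, g (t • x) = t * g x)
    {γ C : ℝ} (hγ : 0 < γ) (hC : 0 ≤ C) (glow : ∀ x, γ * ‖x‖ ≤ g x)
    (gup : ∀ x, g x ≤ C * ‖x‖) :
    ∃ L : Set (Euc n), IsBody L ∧ ∀ x, suppFn L x = g x := by
  have g0 : g 0 = 0 := le_antisymm (by simpa using gup 0) (by simpa using glow 0)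
  have gnonneg : ∀ x, 0 ≤ g x := fun x => le_trans (by positivity) (glow x)
  have hgsub : ∀ u v : Euc n, g (u + v) ≤ g u + g v := by
    intro u v
    have h2 := gconv.2 (Set.mem_univ u) (Set.mem_univ v)
      (by norm_num : (0:ℝ) ≤ 1/2) (by norm_num : (0:ℝ) ≤ 1/2) (by norm_num)
    have h3 : (1/2 : ℝ) • u + (1/2 : ℝ) • v = (1/2 : ℝ) • (u + v) := (smul_add _ u v).symm
    rw [h3, ghom (1/2) (by norm_num) (u+v), smul_eq_mul, smul_eq_mul] at h2
    linarith
  set L : Set (Euc n) := {y | ∀ x : Euc n, (inner ℝ x y : ℝ) ≤ g x} with hLdef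
  have hL0 : (0 : Euc n) ∈ L := by
    intro x
    rw [inner_zero_right]
    exact gnonneg x
  have hLconv : Convex ℝ L := by
    intro y1 hy1 y2 hy2 a b ha hb hab
    intro x
    rw [inner_add_right, real_inner_smul_right, real_inner_smul_right]
    calc a * (inner ℝ x y1 : ℝ) + b * inner ℝ x y2 ≤ a * g x + b * g x :=
      add_le_add (mul_le_mul_of_nonneg_left (hy1 x) ha) (mul_le_mul_of_nonneg_left (hy2 x) hb)
    _ = g x := by rw [← add_mul, hab, one_mul]
  have hLclosed : IsClosed L := by
    have : L = ⋂ x : Euc n, {y : Euc n | (inner ℝ x y : ℝ) ≤ g x} := by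
      ext y; simp [hLdef, Set.mem_iInter]
    rw [this]
    exact isClosed_iInter fun x =>
      isClosed_le (continuous_const.inner continuous_id) continuous_const
  have hLball : L ⊆ Metric.closedBall 0 C := by
    intro y hy
    rw [Metric.mem_closedBall, dist_zero_right]
    have h1 : ‖y‖ ^ 2 ≤ C * ‖y‖ := by
      have := (hy y).trans (gup y)
      rwa [real_inner_self_eq_norm_sq] at this
    rcases eq_or_lt_of_le (norm_nonneg y) with h0 | h0
    · rw [← h0]; exact hC
    · nlinarith
  have hLcompact : IsCompact L :=
    Metric.isCompact_of_isClosed_isBounded hLclosed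
      (Metric.isBounded_closedBall.subset hLball)
  have hLint : (0 : Euc n) ∈ interior L := by
    have hsub : Metric.ball (0 : Euc n) γ ⊆ L := by
      intro y hy x
      have hyγ : ‖y‖ ≤ γ := by
        have := Metric.mem_ball.mp hy
        rw [dist_zero_right] at this
        exact this.le
      calc (inner ℝ x y : ℝ) ≤ ‖x‖ * ‖y‖ := real_inner_le_norm x y
      _ ≤ ‖x‖ * γ := mul_le_mul_of_nonneg_left hyγ (norm_nonneg x)
      _ = γ * ‖x‖ := mul_comm _ _
      _ ≤ g x := glow x
    exact mem_interior.mpr ⟨_, hsub, Metric.isOpen_ball, Metric.mem_ball_self hγ⟩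
  refine ⟨L, ⟨hLconv, hLcompact, hLint⟩, fun x => le_antisymm ?_ ?_⟩
  · apply csSup_le ⟨_, Set.mem_image_of_mem _ hL0⟩
    rintro r ⟨y, hy, rfl⟩
    exact hy x
  · rcases eq_or_ne x 0 with rfl | hx
    · rw [g0, suppFn_zero ⟨0, hL0⟩]
    -- Hahn--Banach
    set f : Euc n →ₗ.[ℝ] ℝ := LinearPMap.mkSpanSingleton x (g x) hx with hfdef
    have hf : ∀ z : f.domain, f z ≤ g z := by
      rintro ⟨z, hz⟩
      rcases Submodule.mem_span_singleton.1 hz with ⟨t, rfl⟩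
      rw [show f ⟨t • x, hz⟩ = t • g x from LinearPMap.mkSpanSingleton'_apply x (g x) _ t hz,
        smul_eq_mul]
      show t * g x ≤ g (t • x)
      rcases lt_trichotomy t 0 with ht | rfl | ht
    -- t < 0
      · have hneg : t • x = (-t) • (-x) := by rw [smul_neg, neg_smul, neg_neg]
        rw [hneg, ghom (-t) (by linarith) (-x)]
        have hsum : 0 ≤ g x + g (-x) := by
          have := hgsub x (-x)
          rw [add_neg_cancel, g0] at this
          linarith
        nlinarith
    -- t = 0
      · simp [g0]
    -- t > 0
      · rw [ghom t ht x]
    obtain ⟨φ, hφ1, hφ2⟩ := exists_extension_of_le_sublinear f g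
      (fun t ht x => ghom t ht x) hgsub hf
    have hφx : φ x = g x := by
      have h1 := hφ1 ⟨x, Submodule.mem_span_singleton_self x⟩
      have h2 : f ⟨x, Submodule.mem_span_singleton_self x⟩ = g x :=
        LinearPMap.mkSpanSingleton_apply ℝ ℝ hx (g x)
      exact h1.trans h2
    set φ' : Euc n →L[ℝ] ℝ := LinearMap.toContinuousLinearMap φ with hφ'def
    set w : Euc n := (InnerProductSpace.toDual ℝ (Euc n)).symm φ' with hwdef
    have hw : ∀ u : Euc n, (inner ℝ u w : ℝ) = φ u := by
      intro u
      rw [real_inner_comm]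
      exact InnerProductSpace.toDual_symm_apply
    have hwL : w ∈ L := fun u => (hw u).le.trans (hφ2 u)
    calc g x = (inner ℝ x w : ℝ) := by rw [hw x, hφx]
    _ ≤ suppFn L x := inner_le_suppFn hLcompact x hwL

end Sublinear

/-- **Lemma 3.2.** For a body `K ⊇ (1/R)B₂ⁿ`, a positive even integer `p` and `ξ ∈ S^{n-1}`,
the function `x ↦ (p-1)Rᵖ h_K(x) + ⟨x,ξ⟩ᵖ/h_K(x)^{p-1}` is convex, positively 1-homogeneous and
positive outside the origin, hence the support function of a convex body with `0` in its
interior. -/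
theorem adapted_power_support_function {n : ℕ} (hn : 2 ≤ n) (K : Set (Euc n)) (hK : IsBody K)
    (R : ℝ) (hR : 0 < R) (hball : R⁻¹ • Metric.closedBall (0 : Euc n) 1 ⊆ K)
    (p : ℕ) (hpe : Even p) (hp : 0 < p) (ξ : Euc n) (hξ : ξ ∈ sph n)
    (g : Euc n → ℝ)
    (hg : g = fun x => ((p : ℝ) - 1) * R ^ p * suppFn K x +
      (inner ℝ x ξ : ℝ) ^ p / suppFn K x ^ (p - 1)) :
    ConvexOn ℝ Set.univ g ∧
    (∀ t : ℝ, 0 < t → ∀ x : Euc n, g (t • x) = t * g x) ∧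
    (∀ x : Euc n, x ≠ 0 → 0 < g x) ∧
    ∃ L : Set (Euc n), IsBody L ∧ ∀ x : Euc n, suppFn L x = g x := by
  obtain ⟨hKconv, hKcomp, hK0⟩ := hK
  have hne : K.Nonempty := ⟨0, interior_subset hK0⟩
  have hξ1 : ‖ξ‖ = 1 := by
    have := hξ
    rw [sph, mem_sphere_zero_iff_norm] at this
    exact this
  have hp2 : 2 ≤ p := by
    have h2 := Nat.even_iff.1 hpe
    omega
  have hp1R : (1:ℝ) ≤ (p:ℝ) - 1 := by
    have : (2:ℝ) ≤ (p:ℝ) := by exact_mod_cast hp2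
    linarith
  have hc : 0 < ((p:ℝ) - 1) * R ^ p := mul_pos (by linarith) (pow_pos hR p)
  -- basic suppFn facts
  have hlow : ∀ x : Euc n, R⁻¹ * ‖x‖ ≤ suppFn K x := norm_le_suppFn hKcomp hR hball
  have hpos : ∀ x : Euc n, x ≠ 0 → 0 < suppFn K x := by
    intro x hx
    have hxn : 0 < ‖x‖ := norm_pos_iff.mpr hx
    have h9 : 0 < R⁻¹ * ‖x‖ := by positivity
    linarith [hlow x]
  have hnn : ∀ x : Euc n, 0 ≤ suppFn K x := fun x =>
    le_trans (by positivity) (hlow x)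
  have h0 : suppFn K (0 : Euc n) = 0 := suppFn_zero hne
  -- value at 0
  have g0 : g 0 = 0 := by
    rw [hg]
    simp [h0, inner_zero_left, zero_pow hp.ne']
  -- homogeneity
  have ghom : ∀ t : ℝ, 0 < t → ∀ x : Euc n, g (t • x) = t * g x := by
    intro t ht x
    rw [hg]
    simp only
    rw [suppFn_smul hKcomp hne ht.le, real_inner_smul_left]
    have key : (t * (inner ℝ x ξ : ℝ)) ^ p / (t * suppFn K x) ^ (p-1)
        = t * ((inner ℝ x ξ : ℝ) ^ p / suppFn K x ^ (p-1)) := by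
      rw [mul_pow, mul_pow, ← pow_sub_one_mul hp.ne' t, mul_assoc,
        mul_div_mul_left _ _ (pow_ne_zero (p-1) ht.ne'), mul_div_assoc]
    rw [key]
    ring
  -- positivity
  have gpos : ∀ x : Euc n, x ≠ 0 → 0 < g x := by
    intro x hx
    rw [hg]
    simp only
    have h1 : 0 < ((p:ℝ) - 1) * R ^ p * suppFn K x := mul_pos hc (hpos x hx)
    have h2 : 0 ≤ (inner ℝ x ξ : ℝ) ^ p / suppFn K x ^ (p-1) :=
      div_nonneg (hpe.pow_nonneg _) (pow_nonneg (hnn x) _)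
    linarith
  have gnonneg : ∀ x : Euc n, 0 ≤ g x := by
    intro x
    rcases eq_or_ne x 0 with rfl | hx
    · rw [g0]
    · exact (gpos x hx).le
  -- convexity
  have gconv : ConvexOn ℝ Set.univ g := by
    refine ⟨convex_univ, fun x _ y _ a b ha hb hab => ?_⟩
    simp only [smul_eq_mul]
    rcases ha.eq_or_lt with rfl | ha'
    · have hb1 : b = 1 := by linarith
      simp [hb1]
    rcases hb.eq_or_lt with rfl | hb'
    · have ha1 : a = 1 := by linarith
      simp [ha1]
    rcases eq_or_ne x 0 with rfl | hx
    · rw [smul_zero, zero_add, ghom b hb' y, g0]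
      simp
    rcases eq_or_ne y 0 with rfl | hy
    · rw [smul_zero, add_zero, ghom a ha' x, g0]
      simp
    rcases eq_or_ne (a • x + b • y) 0 with hz0 | hzne
    · rw [hz0, g0]
      have := mul_nonneg ha (gnonneg x)
      have := mul_nonneg hb (gnonneg y)
      linarith
    -- main case
    have hzpos : 0 < suppFn K (a • x + b • y) := hpos _ hzne
    have hz_le : suppFn K (a • x + b • y) ≤ a * suppFn K x + b * suppFn K y := by
      calc suppFn K (a • x + b • y) ≤ suppFn K (a • x) + suppFn K (b • y) :=
        suppFn_add_le hKcomp hne _ _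
      _ = a * suppFn K x + b * suppFn K y := by
        rw [suppFn_smul hKcomp hne ha, suppFn_smul hKcomp hne hb]
    have habs : |(inner ℝ (a • x + b • y) ξ : ℝ)| ≤ R * suppFn K (a • x + b • y) := by
      calc |(inner ℝ (a • x + b • y) ξ : ℝ)| ≤ ‖a • x + b • y‖ * ‖ξ‖ :=
        abs_real_inner_le_norm _ _
      _ = ‖a • x + b • y‖ := by rw [hξ1, mul_one]
      _ ≤ R * suppFn K (a • x + b • y) := by
        have h5 := mul_le_mul_of_nonneg_left (hlow (a • x + b • y)) hR.le
        rw [← mul_assoc, mul_inv_cancel₀ hR.ne', one_mul] at h5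
        exact h5
    have step1 := ratio_pow_mono hpe hp hR hzpos hz_le habs
    have step2 : (inner ℝ (a • x + b • y) ξ : ℝ) =
        a * (inner ℝ x ξ : ℝ) + b * (inner ℝ y ξ : ℝ) := by
      rw [inner_add_left, real_inner_smul_left, real_inner_smul_left]
    have step3 := ratio_pow_convex hpe hp (hpos x hx) (hpos y hy) ha hb hab
      (a1 := (inner ℝ x ξ : ℝ)) (a2 := (inner ℝ y ξ : ℝ))
    rw [hg]
    simp only [smul_eq_mul]
    rw [step2] at step1 ⊢
    linarith [step1, step3]
  refine ⟨gconv, ghom, gpos, ?_⟩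
  -- bounds for the body construction
  obtain ⟨M, hM⟩ := hKcomp.isBounded.subset_closedBall 0
  have hM0 : 0 ≤ M := by
    have h0K : (0 : Euc n) ∈ K := interior_subset hK0
    simpa [Metric.mem_closedBall, dist_zero_right] using hM h0K
  have glowb : ∀ x : Euc n, (((p:ℝ) - 1) * R ^ p * R⁻¹) * ‖x‖ ≤ g x := by
    intro x
    rw [hg]
    simp only
    have h1 : ((p:ℝ) - 1) * R ^ p * (R⁻¹ * ‖x‖) ≤ ((p:ℝ) - 1) * R ^ p * suppFn K x :=
      mul_le_mul_of_nonneg_left (hlow x) hc.le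
    have h2 : 0 ≤ (inner ℝ x ξ : ℝ) ^ p / suppFn K x ^ (p-1) :=
      div_nonneg (hpe.pow_nonneg _) (pow_nonneg (hnn x) _)
    nlinarith
  have gupb : ∀ x : Euc n, g x ≤ (((p:ℝ) - 1) * R ^ p * M + R ^ (p-1)) * ‖x‖ := by
    intro x
    rcases eq_or_ne x 0 with rfl | hx
    · rw [g0]
      simp
    rw [hg]
    simp only
    have hxn : 0 < ‖x‖ := norm_pos_iff.mpr hx
    have h1 : ((p:ℝ) - 1) * R ^ p * suppFn K x ≤ ((p:ℝ) - 1) * R ^ p * (M * ‖x‖) :=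
      mul_le_mul_of_nonneg_left (suppFn_le_mul_norm hKcomp hne hM x) hc.le
    have h2 : (inner ℝ x ξ : ℝ) ^ p / suppFn K x ^ (p-1)
        ≤ ‖x‖ ^ p / (R⁻¹ * ‖x‖) ^ (p-1) := by
      apply div_le_div₀ (by positivity)
      · calc (inner ℝ x ξ : ℝ) ^ p = |(inner ℝ x ξ : ℝ)| ^ p := (hpe.pow_abs _).symm
        _ ≤ ‖x‖ ^ p := by
          apply pow_le_pow_left₀ (abs_nonneg _)
          calc |(inner ℝ x ξ : ℝ)| ≤ ‖x‖ * ‖ξ‖ := abs_real_inner_le_norm _ _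
          _ = ‖x‖ := by rw [hξ1, mul_one]
      · positivity
      · exact pow_le_pow_left₀ (by positivity) (hlow x) _
    have h3 : ‖x‖ ^ p / (R⁻¹ * ‖x‖) ^ (p-1) = R ^ (p-1) * ‖x‖ := by
      rw [mul_pow, inv_pow, ← pow_sub_one_mul hp.ne' ‖x‖]
      field_simp
    rw [h3] at h2
    nlinarith
  obtain ⟨L, hLbody, hLsupp⟩ := exists_body_of_sublinear g gconv ghom
    (by positivity : 0 < ((p:ℝ) - 1) * R ^ p * R⁻¹)
    (by positivity : (0:ℝ) ≤ ((p:ℝ) - 1) * R ^ p * M + R ^ (p-1))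
    glowb gupb
  exact ⟨L, hLbody, hLsupp⟩
end
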